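/- Let Q be a finite quiver with a distinguished set of unit cycles, D a perfect matching, and D' the perfect matching obtained from D by swapping at a source i of Q \ D (replacing the arrows into i with the arrows out of i). Then for every cycle p in Q, the number of arrows of p lying in D equals the number of arrows of p lying in D'; that is, D and D' are equivalent perfect matchings. -/

import Mathlib

open Classical

/-- A quiver given by tail and head maps on an arrow type. -/
structure QuiverData (V E : Type*) where
  t : E → V
  h : E → V

variable {V E V' E' : Type*}

/-- `n_D(p)`: the number of steps of the path `p` (a list of arrows, in traversal
order) lying in the set of arrows `D`. -/
noncomputable def nD (D : Set E) (p : List E) : ℕ :=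
  p.countP (fun e => decide (e ∈ D))

/-- `p` is a composable path: the head of each step is the tail of the next. -/
def IsPath (Q : QuiverData V E) (p : List E) : Prop :=
  p.Chain' (fun a b => Q.h a = Q.t b)

/-- `p` is a nonempty oriented cycle. -/
def IsCycle (Q : QuiverData V E) (p : List E) : Prop :=
  IsPath Q p ∧ p ≠ [] ∧
    ∃ a b, p.head? = some a ∧ p.getLast? = some b ∧ Q.h b = Q.t a

/-- `D` is a perfect matching with respect to the set `U` of unit cycles:
each unit cycle contains precisely one arrow of `D`. -/
def IsPerfectMatching (U : Set (List E)) (D : Set E) : Prop :=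
  ∀ c ∈ U, nD D c = 1

/-- Abstract combinatorial model of a dimer quiver: the distinguished unit
cycles are oriented cycles, and each arrow lies in exactly two unit cycles. -/
def IsDimer (Q : QuiverData V E) (U : Set (List E)) : Prop :=
  (∀ c ∈ U, IsCycle Q c) ∧ (∀ e : E, {c ∈ U | e ∈ c}.ncard = 2)

/-- The defining relations of the dimer algebra: `p ∼ q` whenever `pa` and `qa`
are unit cycles for a common arrow `a` (here the path `pa`, "first `a`, then `p`",
is the list `a :: p`). -/
inductive DimerRel (U : Set (List E)) : List E → List E → Prop
  | base {p q : List E} {a : E} : (a :: p) ∈ U → (a :: q) ∈ U → DimerRel U p q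

/-- The congruence on paths generated by a relation `R`: the smallest equivalence
relation containing `R` and compatible with concatenation of paths.
`PathEquiv R p q` models `p = q` modulo the ideal generated by `R`. -/
inductive PathEquiv (R : List E → List E → Prop) : List E → List E → Prop
  | of {p q : List E} : R p q → PathEquiv R p q
  | refl (p : List E) : PathEquiv R p p
  | symm {p q : List E} : PathEquiv R p q → PathEquiv R q p
  | trans {p q r : List E} : PathEquiv R p q → PathEquiv R q r → PathEquiv R p r
  | mul {p q p' q' : List E} : PathEquiv R p q → PathEquiv R p' q' →
      PathEquiv R (p ++ p') (q ++ q')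

/-- Two sets of arrows are equivalent perfect matchings when they assign the same
count to every cycle. -/
def MatchingEquiv (Q : QuiverData V E) (D D' : Set E) : Prop :=
  ∀ p, IsCycle Q p → nD D p = nD D' p

/-- An arrow is nonrigid if every perfect matching containing it is equivalent to
a perfect matching not containing it. -/
def NonrigidArrow (Q : QuiverData V E) (U : Set (List E)) (e : E) : Prop :=
  ∀ D, IsPerfectMatching U D → e ∈ D →
    ∃ D', IsPerfectMatching U D' ∧ MatchingEquiv Q D D' ∧ e ∉ D'

/-- `p` is a path from `u` to `v`. -/
def PathFromTo (Q : QuiverData V E) (p : List E) (u v : V) : Prop :=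
  IsPath Q p ∧ ((p = [] ∧ u = v) ∨
    ∃ a b, p.head? = some a ∧ p.getLast? = some b ∧ Q.t a = u ∧ Q.h b = v)

/-- A perfect matching `D` is simple if `Q \ D` is strongly connected. -/
def IsSimpleMatching (Q : QuiverData V E) (U : Set (List E)) (D : Set E) : Prop :=
  IsPerfectMatching U D ∧
    ∀ u v : V, ∃ p, PathFromTo Q p u v ∧ ∀ e ∈ p, e ∉ D

/-- `ρ`, `φ` present `Q'` as obtained from `Q` by contracting the arrows `e`
with `φ e = none` to vertices. -/
def IsContractionMap (Q : QuiverData V E) (Q' : QuiverData V' E')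
    (ρ : V → V') (φ : E → Option E') : Prop :=
  (∀ e e', φ e = some e' → Q'.t e' = ρ (Q.t e) ∧ Q'.h e' = ρ (Q.h e)) ∧
  (∀ e, φ e = none → ρ (Q.t e) = ρ (Q.h e)) ∧
  Function.Surjective ρ ∧ (∀ e' : E', ∃ e, φ e = some e')

/-- Endpoints of an arrow traversed forwards (`true`) or backwards (`false`). -/
def dirEnds (Q : QuiverData V E) : E × Bool → V × V
  | (e, true) => (Q.t e, Q.h e)
  | (e, false) => (Q.h e, Q.t e)

/-- A nonempty unoriented cycle in the underlying graph of `Q`. -/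
def IsUnorientedCycle (Q : QuiverData V E) (w : List (E × Bool)) : Prop :=
  w ≠ [] ∧ w.Chain' (fun x y => (dirEnds Q x).2 = (dirEnds Q y).1) ∧
    ∃ x y, w.head? = some x ∧ w.getLast? = some y ∧
      (dirEnds Q y).2 = (dirEnds Q x).1

/-- `c'` is a cyclic rotation of `c`. -/
def IsRotation (c c' : List E) : Prop := ∃ x y, c = x ++ y ∧ c' = y ++ x

/-- A unit cycle based at the vertex `i`: a cyclic rotation of a unit cycle whose
first arrow has tail `i`. -/
def BasedUnitCycle (Q : QuiverData V E) (U : Set (List E)) (i : V)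
    (c : List E) : Prop :=
  (∃ c₀ ∈ U, IsRotation c₀ c) ∧ ∃ a, c.head? = some a ∧ Q.t a = i

/-- Auxiliary: split a countP into two disjoint pieces. -/
lemma countP_split {α : Type*} (l : List α) (P Q R : α → Bool)
    (h : ∀ e ∈ l, (P e = true ↔ Q e = true ∨ R e = true) ∧
      ¬(Q e = true ∧ R e = true)) :
    l.countP P = l.countP Q + l.countP R := by
  induction l with
  | nil => simp
  | cons a l ih =>
    have ha := h a (by simp)
    rw [List.countP_cons, List.countP_cons, List.countP_cons,
      ih (fun e he => h e (by simp [he]))]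
    by_cases hQ : Q a = true <;> by_cases hR : R a = true <;>
      simp_all <;> omega

/-- Along a path, heads hitting `i` (plus the initial tail) match tails hitting
`i` (plus the final head). -/
lemma path_count (Q : QuiverData V E) (i : V) :
    ∀ p : List E, IsPath Q p → ∀ a b, p.head? = some a → p.getLast? = some b →
    p.countP (fun e => decide (Q.h e = i)) + (if Q.t a = i then 1 else 0)
      = p.countP (fun e => decide (Q.t e = i)) + (if Q.h b = i then 1 else 0) := by
  intro p
  induction p with
  | nil => intro _ a b h; simp at h
  | cons e q ih =>
    intro hp a b ha hb
    obtain rfl : e = a := by simpa using ha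
    cases q with
    | nil =>
      obtain rfl : e = b := by simpa using hb
      simp only [List.countP_cons, List.countP_nil, decide_eq_true_eq]
      by_cases h1 : Q.h e = i <;> by_cases h2 : Q.t e = i <;> simp [h1, h2]
    | cons f r =>
      have hp' : IsPath Q (f :: r) := (List.isChain_cons_cons.mp hp).2
      have hef : Q.h e = Q.t f := (List.isChain_cons_cons.mp hp).1
      have hb' : (f :: r).getLast? = some b := by
        rw [← hb]; simp [List.getLast?_cons_cons]
      have hkey := ih hp' f b rfl hb'
      simp only [List.countP_cons, decide_eq_true_eq] at *
      rw [hef]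
      omega

/-- Any arrow in a cycle has a predecessor in the cycle. -/
lemma exists_pred (Q : QuiverData V E) {c : List E} (hc : IsCycle Q c) {e : E}
    (he : e ∈ c) : ∃ b ∈ c, Q.h b = Q.t e := by
  obtain ⟨hpath, hne, a, b, hhd, hlast, hcyc⟩ := hc
  unfold IsPath at hpath
  obtain ⟨x, y, rfl⟩ := List.append_of_mem he
  rcases List.eq_nil_or_concat x with rfl | ⟨x', d, rfl⟩
  · refine ⟨b, ?_, ?_⟩
    · obtain ⟨hb, rfl⟩ := List.mem_getLast?_eq_getLast (Option.mem_def.mpr hlast)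
      exact List.getLast_mem hb
    · simp only [List.nil_append, List.head?_cons, Option.some.injEq] at hhd
      rw [hcyc, ← hhd]
  · rw [List.Chain', List.isChain_append] at hpath
    refine ⟨d, by simp, ?_⟩
    exact hpath.2.2 d (by simp) e (by simp)

/-- A list containing two distinct elements has at least two elements
satisfying a predicate they both satisfy. -/
lemma two_le_countP {α : Type*} {l : List α} {P : α → Bool} {a b : α}
    (hab : a ≠ b) (ha : a ∈ l) (hb : b ∈ l) (hPa : P a = true) (hPb : P b = true) :
    2 ≤ l.countP P := by
  classical
  rw [List.countP_eq_length_filter]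
  have ha' : a ∈ l.filter P := List.mem_filter.2 ⟨ha, hPa⟩
  have hb' : b ∈ l.filter P := List.mem_filter.2 ⟨hb, hPb⟩
  have h2 : ({a, b} : Finset α) ⊆ (l.filter P).toFinset := by
    intro x hx
    simp only [Finset.mem_insert, Finset.mem_singleton] at hx
    rcases hx with rfl | rfl <;> simp only [List.mem_toFinset] <;> assumption
  calc 2 = ({a, b} : Finset α).card := by
        rw [Finset.card_insert_of_notMem (by simpa using hab), Finset.card_singleton]
    _ ≤ (l.filter P).toFinset.card := Finset.card_le_card h2
    _ ≤ (l.filter P).length := (l.filter P).toFinset_card_le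

/-- No matched arrow has tail `i` and head ≠ `i`, given all arrows into `i`
are matched. -/
lemma no_tail_out (Q : QuiverData V E) (U : Set (List E))
    (hdimer : IsDimer Q U) (D : Set E) (hD : IsPerfectMatching U D) (i : V)
    (hin : ∀ a : E, Q.h a = i → a ∈ D) :
    ∀ e ∈ D, Q.t e = i → Q.h e = i := by
  intro e heD hte
  by_contra hne
  have hcard := hdimer.2 e
  have hnonempty : {c ∈ U | e ∈ c}.Nonempty := by
    apply Set.nonempty_of_ncard_ne_zero; rw [hcard]; omega
  obtain ⟨c, hcU, hec⟩ := hnonempty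
  obtain ⟨b, hbc, hhb⟩ := exists_pred Q (hdimer.1 c hcU) hec
  have hbD : b ∈ D := hin b (by rw [hhb, hte])
  have hbe : b ≠ e := fun h => hne (by rw [← h, hhb, hte])
  have h2 : 2 ≤ nD D c :=
    two_le_countP hbe hbc hec (by simp [hbD]) (by simp [heD])
  have := hD c hcU
  omega

/-- swapping a perfect matching `D` at a source `i` of `Q \ D`
(replacing the arrows into `i` by the arrows out of `i`) produces an equivalent
perfect matching: both assign the same count to every cycle of `Q`. -/
theorem stmt1 [Fintype V] [Fintype E] (Q : QuiverData V E) (U : Set (List E))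
    (hdimer : IsDimer Q U) (D : Set E) (hD : IsPerfectMatching U D) (i : V)
    (hin : ∀ a : E, Q.h a = i → a ∈ D) (hout : ∃ a : E, Q.t a = i) :
    MatchingEquiv Q D ((D \ {a : E | Q.h a = i}) ∪ {a : E | Q.t a = i}) := by
  intro p hp
  obtain ⟨hpath, hne, a, b, hhd, hlast, hcyc⟩ := hp
  have key := path_count Q i p hpath a b hhd hlast
  rw [hcyc] at key
  have hheq : p.countP (fun e => decide (Q.h e = i))
      = p.countP (fun e => decide (Q.t e = i)) := by omega
  have hnotail := no_tail_out Q U hdimer D hD i hin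
  have hsplit1 : nD D p = p.countP (fun e => decide (Q.h e = i))
      + p.countP (fun e => decide (e ∈ D ∧ Q.h e ≠ i)) := by
    apply countP_split
    intro e _
    simp only [decide_eq_true_iff]
    constructor
    · constructor
      · intro heD
        by_cases h : Q.h e = i
        · exact Or.inl h
        · exact Or.inr ⟨heD, h⟩
      · rintro (h | ⟨h, _⟩)
        · exact hin e h
        · exact h
    · rintro ⟨h1, _, h2⟩; exact h2 h1
  have hsplit2 : nD ((D \ {a : E | Q.h a = i}) ∪ {a : E | Q.t a = i}) p
      = p.countP (fun e => decide (Q.t e = i))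
      + p.countP (fun e => decide (e ∈ D ∧ Q.h e ≠ i)) := by
    apply countP_split
    intro e _
    simp only [decide_eq_true_iff, Set.mem_union, Set.mem_diff,
      Set.mem_setOf_eq]
    constructor
    · constructor
      · rintro (⟨h1, h2⟩ | h); · exact Or.inr ⟨h1, h2⟩
        · exact Or.inl h
      · rintro (h | ⟨h1, h2⟩)
        · exact Or.inr h
        · exact Or.inl ⟨h1, h2⟩
    · rintro ⟨h1, h2, h3⟩
      exact h3 (hnotail e h2 h1)
  rw [hsplit1, hsplit2, hheq]
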